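/- Let h : [a,b] → (X, d_X) be a map into a metric space. Suppose that for every k ∈ {0,...,m−1} and every dyadic subinterval I of [a,b] of generation k, ∂_h^(2)(a(I), b(I)) ≤ ε², where ∂_h^(2)(x,y) = (1/2)[(d(h(x),h((x+y)/2))/((y−x)/2))² + (d(h((x+y)/2),h(y))/((y−x)/2))²] − (d(h(x),h(y))/(y−x))². Then for all integers 0 ≤ s < t ≤ 2^m: |d_X(h(a + s·2^{−m}(b−a)), h(a + t·2^{−m}(b−a))) − (t−s)·2^{−m}·d_X(h(a), h(b))| ≤ 4^{m−1}·(b−a)·ε. -/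

import Mathlib

/-- The midpoint defect `∂_h^(2)(x,y)` of a map `h : ℝ → X` into a metric space. -/
noncomputable def defect2 {X : Type*} [MetricSpace X] (h : ℝ → X) (x y : ℝ) : ℝ :=
  (1 / 2) * ((dist (h x) (h ((x + y) / 2)) / ((y - x) / 2)) ^ 2
      + (dist (h ((x + y) / 2)) (h y) / ((y - x) / 2)) ^ 2)
    - (dist (h x) (h y) / (y - x)) ^ 2

lemma num_lemma (α β γ ε : ℝ) (hγ : 0 ≤ γ) (hε : 0 ≤ ε)
    (h1 : γ ≤ (α + β) / 2) (h2 : (α ^ 2 + β ^ 2) / 2 - γ ^ 2 ≤ ε ^ 2) :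
    |α - γ| ≤ 2 * ε ∧ |β - γ| ≤ 2 * ε := by
  have hd : ((α + β) / 2 - γ) ^ 2 ≤ ε ^ 2 := by nlinarith [sq_nonneg (α - β)]
  have hd' : (α + β) / 2 - γ ≤ ε := by nlinarith [sq_nonneg ((α+β)/2 - γ - ε)]
  have hab : (α - β) ^ 2 ≤ (2 * ε) ^ 2 := by nlinarith [sq_nonneg (α + β)]
  have hab1 : α - β ≤ 2 * ε := by nlinarith [sq_nonneg (α - β - 2*ε)]
  have hab2 : β - α ≤ 2 * ε := by nlinarith [sq_nonneg (β - α - 2*ε)]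
  constructor <;> rw [abs_le] <;> constructor <;> linarith

lemma halve {X : Type*} [MetricSpace X] (h : ℝ → X) (x y ε : ℝ) (hxy : x < y) (hε : 0 ≤ ε)
    (hd : defect2 h x y ≤ ε ^ 2) :
    |dist (h x) (h ((x + y) / 2)) - dist (h x) (h y) / 2| ≤ ε * (y - x) ∧
    |dist (h ((x + y) / 2)) (h y) - dist (h x) (h y) / 2| ≤ ε * (y - x) := by
  set p := dist (h x) (h ((x + y) / 2)) with hp
  set q := dist (h ((x + y) / 2)) (h y) with hq
  set r := dist (h x) (h y) with hr
  have hL : (0:ℝ) < y - x := by linarith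
  have htri : r ≤ p + q := dist_triangle _ _ _
  have h1 : r / (y - x) ≤ (p / ((y - x) / 2) + q / ((y - x) / 2)) / 2 := by
    have e : (p / ((y - x) / 2) + q / ((y - x) / 2)) / 2 = (p + q) / (y - x) := by
      field_simp
    rw [e]
    gcongr
  have h2 := num_lemma (p / ((y - x) / 2)) (q / ((y - x) / 2)) (r / (y - x)) ε
    (div_nonneg dist_nonneg hL.le) hε h1 (by
      have : (1 / 2) * ((p / ((y - x) / 2)) ^ 2 + (q / ((y - x) / 2)) ^ 2)
          - (r / (y - x)) ^ 2 ≤ ε ^ 2 := hd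
      linarith)
  constructor
  · have e1 : p - r / 2 = (p / ((y - x) / 2) - r / (y - x)) * ((y - x) / 2) := by
      field_simp
    rw [e1, abs_mul, abs_of_pos (by linarith : (0:ℝ) < (y - x)/2)]
    calc |p / ((y - x) / 2) - r / (y - x)| * ((y - x) / 2)
        ≤ (2 * ε) * ((y - x) / 2) := by
          exact mul_le_mul_of_nonneg_right h2.1 (by linarith)
      _ = ε * (y - x) := by ring
  · have e1 : q - r / 2 = (q / ((y - x) / 2) - r / (y - x)) * ((y - x) / 2) := by
      field_simp
    rw [e1, abs_mul, abs_of_pos (by linarith : (0:ℝ) < (y - x)/2)]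
    calc |q / ((y - x) / 2) - r / (y - x)| * ((y - x) / 2)
        ≤ (2 * ε) * ((y - x) / 2) := by
          exact mul_le_mul_of_nonneg_right h2.2 (by linarith)
      _ = ε * (y - x) := by ring

lemma grid_bound {X : Type*} [MetricSpace X] (h : ℝ → X) (a b ε : ℝ) (hab : a < b)
    (hε : 0 ≤ ε) :
    ∀ k : ℕ, (∀ j < k, ∀ i : ℕ, i < 2 ^ j →
        defect2 h (a + (i : ℝ) * ((b - a) / 2 ^ j)) (a + ((i : ℝ) + 1) * ((b - a) / 2 ^ j)) ≤ ε ^ 2) →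
      ∀ i : ℕ, i < 2 ^ k →
        |dist (h (a + (i : ℝ) * ((b - a) / 2 ^ k))) (h (a + ((i : ℝ) + 1) * ((b - a) / 2 ^ k)))
            - dist (h a) (h b) / 2 ^ k|
          ≤ 2 * k * ε * (b - a) / 2 ^ k := by
  intro k
  induction k with
  | zero =>
    intro _ i hi
    interval_cases i
    norm_num [show a + (b - a) = b by ring]
  | succ k ih =>
    intro hdef i hi
    have h2k : (0:ℝ) < 2 ^ k := by positivity
    have hLpos : (0:ℝ) < (b - a) / 2 ^ k := div_pos (by linarith) h2k
    have hdk : ∀ j < k, ∀ i : ℕ, i < 2 ^ j →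
        defect2 h (a + (i : ℝ) * ((b - a) / 2 ^ j)) (a + ((i : ℝ) + 1) * ((b - a) / 2 ^ j)) ≤ ε ^ 2 :=
      fun j hj => hdef j (Nat.lt_succ_of_lt hj)
    have hsplit : 2 ^ (k + 1) = 2 ^ k + 2 ^ k := by rw [pow_succ]; ring
    have hRHS : 2 * ((k:ℝ) + 1) * ε * (b - a) / 2 ^ (k + 1)
        = ε * ((b - a) / 2 ^ k) + 2 * (k:ℝ) * ε * (b - a) / 2 ^ k / 2 := by
      rw [pow_succ]; field_simp; ring
    rcases Nat.even_or_odd i with ⟨j, hj⟩ | ⟨j, hj⟩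
    · -- i = j + j
      have hjk : j < 2 ^ k := by omega
      have hxy : a + (j : ℝ) * ((b - a) / 2 ^ k) < a + ((j : ℝ) + 1) * ((b - a) / 2 ^ k) := by
        nlinarith
      have hpar := ih hdk j hjk
      have hh := halve h _ _ ε hxy hε (hdef k (Nat.lt_succ_self k) j hjk)
      have e1 : a + (i : ℝ) * ((b - a) / 2 ^ (k + 1)) = a + (j : ℝ) * ((b - a) / 2 ^ k) := by
        subst hj; push_cast; rw [pow_succ]; field_simp; ring
      have e2 : a + ((i : ℝ) + 1) * ((b - a) / 2 ^ (k + 1))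
          = ((a + (j : ℝ) * ((b - a) / 2 ^ k)) + (a + ((j : ℝ) + 1) * ((b - a) / 2 ^ k))) / 2 := by
        subst hj; push_cast; rw [pow_succ]; field_simp; ring
      rw [e1, e2]
      push_cast
      rw [hRHS]
      have hA := hh.1
      have eyx : (a + ((j : ℝ) + 1) * ((b - a) / 2 ^ k)) - (a + (j : ℝ) * ((b - a) / 2 ^ k))
          = (b - a) / 2 ^ k := by ring
      rw [eyx] at hA
      set p := dist (h (a + (j : ℝ) * ((b - a) / 2 ^ k)))
        (h ((a + (j : ℝ) * ((b - a) / 2 ^ k) + (a + ((j : ℝ) + 1) * ((b - a) / 2 ^ k))) / 2))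
      set r := dist (h (a + (j : ℝ) * ((b - a) / 2 ^ k))) (h (a + ((j : ℝ) + 1) * ((b - a) / 2 ^ k)))
      set D := dist (h a) (h b)
      calc |p - D / 2 ^ (k + 1)| ≤ |p - r / 2| + |r / 2 - D / 2 ^ (k + 1)| := abs_sub_le _ _ _
        _ ≤ ε * ((b - a) / 2 ^ k) + 2 * (k:ℝ) * ε * (b - a) / 2 ^ k / 2 := by
            have e3 : r / 2 - D / 2 ^ (k + 1) = (r - D / 2 ^ k) / 2 := by rw [pow_succ]; ring
            rw [e3, abs_div, abs_two]
            exact add_le_add hA (by linarith)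
    · -- i = 2j + 1
      have hjk : j < 2 ^ k := by omega
      have hxy : a + (j : ℝ) * ((b - a) / 2 ^ k) < a + ((j : ℝ) + 1) * ((b - a) / 2 ^ k) := by
        nlinarith
      have hpar := ih hdk j hjk
      have hh := halve h _ _ ε hxy hε (hdef k (Nat.lt_succ_self k) j hjk)
      have e1 : a + (i : ℝ) * ((b - a) / 2 ^ (k + 1))
          = ((a + (j : ℝ) * ((b - a) / 2 ^ k)) + (a + ((j : ℝ) + 1) * ((b - a) / 2 ^ k))) / 2 := by
        subst hj; push_cast; rw [pow_succ]; field_simp; ring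
      have e2 : a + ((i : ℝ) + 1) * ((b - a) / 2 ^ (k + 1))
          = a + ((j : ℝ) + 1) * ((b - a) / 2 ^ k) := by
        subst hj; push_cast; rw [pow_succ]; field_simp; ring
      rw [e1, e2]
      push_cast
      rw [hRHS]
      have hA := hh.2
      have eyx : (a + ((j : ℝ) + 1) * ((b - a) / 2 ^ k)) - (a + (j : ℝ) * ((b - a) / 2 ^ k))
          = (b - a) / 2 ^ k := by ring
      rw [eyx] at hA
      set q := dist (h ((a + (j : ℝ) * ((b - a) / 2 ^ k) + (a + ((j : ℝ) + 1) * ((b - a) / 2 ^ k))) / 2))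
        (h (a + ((j : ℝ) + 1) * ((b - a) / 2 ^ k)))
      set r := dist (h (a + (j : ℝ) * ((b - a) / 2 ^ k))) (h (a + ((j : ℝ) + 1) * ((b - a) / 2 ^ k)))
      set D := dist (h a) (h b)
      calc |q - D / 2 ^ (k + 1)| ≤ |q - r / 2| + |r / 2 - D / 2 ^ (k + 1)| := abs_sub_le _ _ _
        _ ≤ ε * ((b - a) / 2 ^ k) + 2 * (k:ℝ) * ε * (b - a) / 2 ^ k / 2 := by
            have e3 : r / 2 - D / 2 ^ (k + 1) = (r - D / 2 ^ k) / 2 := by rw [pow_succ]; ring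
            rw [e3, abs_div, abs_two]
            exact add_le_add hA (by linarith)

lemma chain_bound {X : Type*} [MetricSpace X] (h : ℝ → X) (a b : ℝ) (m : ℕ) (c : ℝ)
    (hstep : ∀ i : ℕ, i < 2 ^ m →
      dist (h (a + (i : ℝ) * ((b - a) / 2 ^ m))) (h (a + ((i : ℝ) + 1) * ((b - a) / 2 ^ m))) ≤ c) :
    ∀ u v : ℕ, u ≤ v → v ≤ 2 ^ m →
      dist (h (a + (u : ℝ) * ((b - a) / 2 ^ m))) (h (a + (v : ℝ) * ((b - a) / 2 ^ m)))
        ≤ ((v : ℝ) - (u : ℝ)) * c := by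
  intro u v huv hv
  have key := dist_le_range_sum_dist (fun i => h (a + ((u + i : ℕ) : ℝ) * ((b - a) / 2 ^ m))) (v - u)
  simp only [Nat.add_zero] at key
  rw [show u + (v - u) = v from by omega] at key
  have hsum : ∑ i ∈ Finset.range (v - u),
      dist (h (a + ((u + i : ℕ) : ℝ) * ((b - a) / 2 ^ m)))
        (h (a + ((u + i + 1 : ℕ) : ℝ) * ((b - a) / 2 ^ m)))
      ≤ ∑ _i ∈ Finset.range (v - u), c := by
    apply Finset.sum_le_sum
    intro i hi
    rw [Finset.mem_range] at hi
    have hlt : u + i < 2 ^ m := by omega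
    have e : ((u + i + 1 : ℕ) : ℝ) = ((u + i : ℕ) : ℝ) + 1 := by push_cast; ring
    rw [e]
    exact hstep (u + i) hlt
  rw [Finset.sum_const, Finset.card_range, nsmul_eq_mul] at hsum
  have e2 : ((v - u : ℕ) : ℝ) = (v : ℝ) - (u : ℝ) := by
    rw [Nat.cast_sub huv]
  calc dist (h (a + (u : ℝ) * ((b - a) / 2 ^ m))) (h (a + (v : ℝ) * ((b - a) / 2 ^ m)))
      ≤ ∑ i ∈ Finset.range (v - u),
        dist (h (a + ((u + i : ℕ) : ℝ) * ((b - a) / 2 ^ m)))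
          (h (a + ((u + i + 1 : ℕ) : ℝ) * ((b - a) / 2 ^ m))) := key
    _ ≤ ((v - u : ℕ) : ℝ) * c := hsum
    _ = ((v : ℝ) - (u : ℝ)) * c := by rw [e2]

lemma nat_numeric : ∀ m : ℕ, 1 ≤ m → (2 ^ m - 1) * (2 * m) ≤ 4 ^ (m - 1) * 2 ^ m := by
  have h2m : ∀ n : ℕ, 2 ≤ n → 2 * n ≤ 4 ^ (n - 1) := by
    intro n hn
    induction n with
    | zero => omega
    | succ k ih =>
      rcases Nat.lt_or_ge k 2 with hk | hk
      · interval_cases k <;> first | omega | norm_num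
      · have h1 := ih hk
        have h4 : 4 ^ (k + 1 - 1) = 4 * 4 ^ (k - 1) := by
          rw [Nat.add_sub_cancel, ← pow_succ']
          congr 1
          omega
        have hp : 1 ≤ 4 ^ (k - 1) := Nat.one_le_pow _ _ (by norm_num)
        omega
  intro m hm
  rcases Nat.lt_or_ge m 2 with h | h
  · interval_cases m <;> norm_num
  · calc (2 ^ m - 1) * (2 * m) ≤ 2 ^ m * (2 * m) := by
          exact Nat.mul_le_mul_right _ (Nat.sub_le _ _)
      _ = (2 * m) * 2 ^ m := by ring
      _ ≤ 4 ^ (m - 1) * 2 ^ m := Nat.mul_le_mul_right _ (h2m m h)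

lemma final_arith (d dA dB D δ S T P Q : ℝ)
    (hPD : P * Q = D)
    (hU : d ≤ (T - S) * (Q + δ)) (hA : dA ≤ (S - 0) * (Q + δ))
    (hB : dB ≤ (P - T) * (Q + δ)) (htri : D ≤ dA + d + dB)
    (k1 : (T - S) * δ ≤ (P - 1) * δ) (k2 : (P - (T - S)) * δ ≤ (P - 1) * δ) :
    |d - (T - S) * Q| ≤ (P - 1) * δ := by
  rw [abs_le]
  constructor
  · nlinarith [htri, hA, hB, k2, hPD]
  · nlinarith [hU, k1]

/-- Metric-space energy lemma: if the midpoint defect of `h` is at most `ε²` on every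
dyadic subinterval of `[a,b]` of generation `k ∈ {0,...,m−1}`, then `h` is within
`4^{m−1}(b−a)ε` of a constant-speed geodesic on the `2^{−m}`-grid of `[a,b]`. -/
theorem metric_energy_lemma {X : Type*} [MetricSpace X] (h : ℝ → X)
    (a b ε : ℝ) (hab : a < b) (hε : 0 ≤ ε) (m : ℕ) (hm : 1 ≤ m)
    (hdef : ∀ k < m, ∀ i < 2 ^ k,
      defect2 h (a + (i : ℝ) * ((b - a) / 2 ^ k)) (a + ((i : ℝ) + 1) * ((b - a) / 2 ^ k)) ≤ ε ^ 2) :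
    ∀ s t : ℕ, s < t → t ≤ 2 ^ m →
      |dist (h (a + (s : ℝ) * ((b - a) / 2 ^ m))) (h (a + (t : ℝ) * ((b - a) / 2 ^ m)))
          - ((t : ℝ) - (s : ℝ)) / 2 ^ m * dist (h a) (h b)|
        ≤ 4 ^ (m - 1) * (b - a) * ε := by
  intro s t hst ht
  have h2m : (0:ℝ) < 2 ^ m := by positivity
  have hba : (0:ℝ) ≤ b - a := by linarith
  obtain ⟨δ, hδdef⟩ : ∃ δ : ℝ, δ = 2 * (m:ℝ) * ε * (b - a) / 2 ^ m := ⟨_, rfl⟩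
  have hδ0 : 0 ≤ δ := by
    rw [hδdef]
    apply div_nonneg _ h2m.le
    exact mul_nonneg (mul_nonneg (by positivity) hε) hba
  have hdef' : ∀ j < m, ∀ i : ℕ, i < 2 ^ j →
      defect2 h (a + (i:ℝ) * ((b - a) / 2 ^ j)) (a + ((i:ℝ) + 1) * ((b - a) / 2 ^ j)) ≤ ε ^ 2 :=
    fun j hj i hi => hdef j hj i (by exact_mod_cast hi)
  have hgrid := grid_bound h a b ε hab hε m hdef'
  have hstep : ∀ i : ℕ, i < 2 ^ m →
      dist (h (a + (i:ℝ) * ((b - a) / 2 ^ m))) (h (a + ((i:ℝ) + 1) * ((b - a) / 2 ^ m)))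
        ≤ dist (h a) (h b) / 2 ^ m + δ := by
    intro i hi
    have h1 := (abs_le.mp (hgrid i hi)).2
    rw [hδdef]
    linarith
  have hchain := chain_bound h a b m (dist (h a) (h b) / 2 ^ m + δ) hstep
  have hU := hchain s t hst.le ht
  have hA := hchain 0 s (Nat.zero_le s) (le_trans hst.le ht)
  have hB := hchain t (2 ^ m) ht le_rfl
  have ea : a + ((0:ℕ):ℝ) * ((b - a) / 2 ^ m) = a := by norm_num
  have eb : a + ((2 ^ m : ℕ):ℝ) * ((b - a) / 2 ^ m) = b := by
    push_cast
    field_simp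
    ring
  rw [ea] at hA
  rw [eb] at hB
  push_cast at hA hB
  have htri : dist (h a) (h b) ≤ dist (h a) (h (a + (s:ℝ) * ((b - a) / 2 ^ m)))
      + dist (h (a + (s:ℝ) * ((b - a) / 2 ^ m))) (h (a + (t:ℝ) * ((b - a) / 2 ^ m)))
      + dist (h (a + (t:ℝ) * ((b - a) / 2 ^ m))) (h b) := dist_triangle4 _ _ _ _
  by_cases hcase : s = 0 ∧ t = 2 ^ m
  · obtain ⟨rfl, rfl⟩ := hcase
    push_cast
    rw [show a + (0:ℝ) * ((b - a) / 2 ^ m) = a by ring,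
      show a + (2:ℝ) ^ m * ((b - a) / 2 ^ m) = b by field_simp; ring]
    rw [show ((2:ℝ) ^ m - 0) / 2 ^ m * dist (h a) (h b) = dist (h a) (h b) by field_simp; ring]
    rw [sub_self, abs_zero]
    have : (0:ℝ) ≤ 4 ^ (m - 1) * (b - a) := by positivity
    nlinarith
  · have hn1' : t + 1 ≤ 2 ^ m + s := by omega
    have hn2' : s + 1 ≤ t := hst
    have hn1 : (t:ℝ) - s ≤ 2 ^ m - 1 := by
      have : (t:ℝ) + 1 ≤ 2 ^ m + s := by exact_mod_cast hn1'
      linarith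
    have hn2 : (2:ℝ) ^ m - ((t:ℝ) - s) ≤ 2 ^ m - 1 := by
      have : (s:ℝ) + 1 ≤ t := by exact_mod_cast hn2'
      linarith
    have k1 : ((t:ℝ) - s) * δ ≤ ((2:ℝ) ^ m - 1) * δ := mul_le_mul_of_nonneg_right hn1 hδ0
    have k2 : ((2:ℝ) ^ m - ((t:ℝ) - s)) * δ ≤ ((2:ℝ) ^ m - 1) * δ :=
      mul_le_mul_of_nonneg_right hn2 hδ0
    have hPD : (2:ℝ) ^ m * (dist (h a) (h b) / 2 ^ m) = dist (h a) (h b) := by field_simp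
    have hmain := final_arith _ _ _ _ _ _ _ _ _ hPD hU hA hB htri k1 k2
    rw [show ((t:ℝ) - (s:ℝ)) / 2 ^ m * dist (h a) (h b)
        = ((t:ℝ) - (s:ℝ)) * (dist (h a) (h b) / 2 ^ m) from by ring]
    refine hmain.trans ?_
    have h1n : (1:ℕ) ≤ 2 ^ m := Nat.one_le_two_pow
    have hc : ((2:ℝ) ^ m - 1) * (2 * (m:ℝ)) ≤ 4 ^ (m - 1) * 2 ^ m := by
      have := nat_numeric m hm
      have hcast : (((2 ^ m - 1) * (2 * m) : ℕ) : ℝ) ≤ ((4 ^ (m - 1) * 2 ^ m : ℕ) : ℝ) := by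
        exact_mod_cast this
      push_cast [Nat.cast_sub h1n] at hcast
      convert hcast using 2 <;> push_cast <;> ring
    have e : ((2:ℝ) ^ m - 1) * δ = (((2:ℝ) ^ m - 1) * (2 * (m:ℝ))) * ((ε * (b - a)) / 2 ^ m) := by
      rw [hδdef]; ring
    have e2 : (4:ℝ) ^ (m - 1) * (b - a) * ε = ((4:ℝ) ^ (m - 1) * 2 ^ m) * ((ε * (b - a)) / 2 ^ m) := by
      field_simp
    rw [e, e2]
    exact mul_le_mul_of_nonneg_right hc (div_nonneg (mul_nonneg hε hba) h2m.le)
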